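/- (Bose) For n ≥ 3, every cap of PG(n,2) has at most 2^n points; moreover, for every hyperplane H of PG(n,2) (i.e., every n-dimensional subspace of F_2^{n+1}), the set of points of PG(n,2) not contained in H is a cap of exactly 2^n points. -/

import Mathlib

/-- No three points of the set `A ⊆ PG(n,q)` are collinear, where three points are
collinear if their representative vectors span a subspace of dimension at most 2. -/
def NoThreeCollinear (n : ℕ) (F : Type) [Field F]
    (A : Set (Projectivization F (Fin (n + 1) → F))) : Prop :=
  ∀ p₁ ∈ A, ∀ p₂ ∈ A, ∀ p₃ ∈ A, p₁ ≠ p₂ → p₁ ≠ p₃ → p₂ ≠ p₃ →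
    ¬ (Module.finrank F ↥(p₁.submodule ⊔ p₂.submodule ⊔ p₃.submodule) ≤ 2)

open Projectivization Submodule

section Helpers

variable {F : Type} [Field F] [Fintype F]

lemma F2.eq_zero_or_one (hF : Fintype.card F = 2) (a : F) : a = 0 ∨ a = 1 := by
  by_cases h : a = 0
  · exact Or.inl h
  · right
    have := FiniteField.pow_card_sub_one_eq_one a h
    rw [hF] at this
    simpa using this

lemma F2.add_self {M : Type*} [AddCommGroup M] [Module F M]
    (hF : Fintype.card F = 2) (v : M) : v + v = 0 := by
  have h11 : (1 : F) + 1 = 0 := by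
    rcases F2.eq_zero_or_one hF ((1 : F) + 1) with h | h
    · exact h
    · exact absurd (by linear_combination h : (1 : F) = 0) one_ne_zero
  calc v + v = ((1 : F) + 1) • v := by rw [add_smul, one_smul]
    _ = 0 := by rw [h11, zero_smul]

variable {M : Type*} [AddCommGroup M] [Module F M]

lemma F2.mk_inj (hF : Fintype.card F = 2) {v w : M} (hv : v ≠ 0) (hw : w ≠ 0)
    (h : Projectivization.mk F v hv = Projectivization.mk F w hw) : v = w := by
  rw [mk_eq_mk_iff] at h
  obtain ⟨a, rfl⟩ := h
  have : (a : F) = 1 := by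
    rcases F2.eq_zero_or_one hF (a : F) with h | h
    · exact absurd h a.ne_zero
    · exact h
  rw [Units.smul_def, this, one_smul]

lemma F2.rep_eq (hF : Fintype.card F = 2) {v : M} (hv : v ≠ 0) :
    (Projectivization.mk F v hv).rep = v :=
  F2.mk_inj hF (rep_nonzero _) hv (by rw [mk_rep])

/-- sup of three point submodules is span of the three reps -/
lemma sup_submodule_eq (p q r : Projectivization F M) :
    p.submodule ⊔ q.submodule ⊔ r.submodule = span F {p.rep, q.rep, r.rep} := by
  rw [submodule_eq, submodule_eq, submodule_eq,
    Submodule.span_insert, Submodule.span_insert, sup_assoc]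

/-- forward: if third vector is sum, rank ≤ 2 -/
lemma rank_le_two_of_sum (hF : Fintype.card F = 2) {v w : M} (hv : v ≠ 0) (hw : w ≠ 0)
    (hvw : v + w ≠ 0) :
    Module.finrank F ↥(span F ({v + w, v, w} : Set M)) ≤ 2 := by
  have h1 : (v + w) ∈ span F ({v, w} : Set M) := by
    rw [Submodule.mem_span_pair]
    exact ⟨1, 1, by simp⟩
  rw [Submodule.span_insert_eq_span h1]
  classical
  refine le_trans (finrank_span_le_card _) ?_
  simp [Set.toFinset_insert]
  exact Finset.card_insert_le _ _

/-- backward: over F2, three distinct nonzero vectors spanning rank ≤ 2 sum up -/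
lemma sum_of_rank_le_two (hF : Fintype.card F = 2) {u v w : M}
    (hu : u ≠ 0) (hv : v ≠ 0) (hw : w ≠ 0)
    (huv : u ≠ v) (huw : u ≠ w) (hvw : v ≠ w)
    (hr : Module.finrank F ↥(span F ({u, v, w} : Set M)) ≤ 2) :
    w = u + v := by
  -- u, v linearly independent
  have hli : LinearIndependent F ![u, v] := by
    rw [LinearIndependent.pair_iff' hu]
    intro a ha
    rcases F2.eq_zero_or_one hF a with h | h
    · rw [h, zero_smul] at ha; exact hv ha.symm
    · rw [h, one_smul] at ha; exact huv ha
  have hrange : Set.range ![u, v] = ({u, v} : Set M) := by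
    simp [Matrix.range_cons, Matrix.range_empty, Set.pair_comm]
  have hfr : Module.finrank F ↥(span F ({u, v} : Set M)) = 2 := by
    rw [← hrange]
    simpa using finrank_span_eq_card hli
  have hfin : FiniteDimensional F ↥(span F ({u, v, w} : Set M)) := by
    apply FiniteDimensional.span_of_finite
    exact (Set.finite_singleton w).insert v |>.insert u
  have hle : span F ({u, v} : Set M) ≤ span F ({u, v, w} : Set M) := by
    apply Submodule.span_mono
    intro x hx
    rcases hx with h | h
    · exact Or.inl h
    · exact Or.inr (Or.inl h)
  have heq : span F ({u, v} : Set M) = span F ({u, v, w} : Set M) :=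
    Submodule.eq_of_le_of_finrank_le hle (by omega)
  have hwmem : w ∈ span F ({u, v} : Set M) := by
    rw [heq]
    exact Submodule.subset_span (by right; right; rfl)
  rw [Submodule.mem_span_pair] at hwmem
  obtain ⟨a, b, hab⟩ := hwmem
  rcases F2.eq_zero_or_one hF a with ha | ha <;>
    rcases F2.eq_zero_or_one hF b with hb | hb <;>
      rw [ha, hb] at hab <;> simp at hab
  · exact absurd hab.symm hw
  · exact absurd hab hvw
  · exact absurd hab huw
  · exact hab.symm

end Helpers

/-- Bose: for `n ≥ 3`, every cap of `PG(n,2)` has at most `2^n` points; moreover, for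
every hyperplane `H` of `PG(n,2)` (an `n`-dimensional subspace of `F₂^{n+1}`), the set
of points not contained in `H` is a cap of exactly `2^n` points. -/
theorem bose_caps_in_PG_n_2 (n : ℕ) (hn : 3 ≤ n) (F : Type) [Field F] [Fintype F]
    (hF : Fintype.card F = 2) :
    (∀ A : Set (Projectivization F (Fin (n + 1) → F)),
        NoThreeCollinear n F A → A.ncard ≤ 2 ^ n) ∧
    (∀ H : Submodule F (Fin (n + 1) → F), Module.finrank F H = n →
        NoThreeCollinear n F {p | ¬ p.submodule ≤ H} ∧
        {p : Projectivization F (Fin (n + 1) → F) | ¬ p.submodule ≤ H}.ncard = 2 ^ n) := by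
  classical
  haveI : Finite (Projectivization F (Fin (n + 1) → F)) := Quotient.finite _
  have hrep_inj : Function.Injective
      (Projectivization.rep (K := F) (V := Fin (n + 1) → F)) := by
    intro p q h
    have : Projectivization.mk F p.rep p.rep_nonzero
        = Projectivization.mk F q.rep q.rep_nonzero :=
      (mk_eq_mk_iff F _ _ _ _).mpr ⟨1, by simp [h]⟩
    rwa [mk_rep, mk_rep] at this
  have hcardtot : Nat.card (Fin (n + 1) → F) = 2 ^ (n + 1) := by
    simp [Nat.card_eq_fintype_card, hF]
  have hpow : (2 : ℕ) ^ (n + 1) = 2 ^ n * 2 := pow_succ 2 n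
  constructor
  · -- Part 1: every cap has at most 2^n points
    intro A hA
    have hAfin : A.Finite := Set.toFinite A
    rcases A.eq_empty_or_nonempty with rfl | ⟨p0, hp0⟩
    · simp
    set V : Set (Fin (n + 1) → F) := Projectivization.rep '' A with hV
    have hVfin : V.Finite := hAfin.image _
    have hcard : A.ncard = V.ncard := (Set.ncard_image_of_injective A hrep_inj).symm
    set v0 := p0.rep with hv0
    set W : Set (Fin (n + 1) → F) := (fun x => v0 + x) '' V with hW
    have hWfin : W.Finite := hVfin.image _
    have hWcard : W.ncard = V.ncard :=
      Set.ncard_image_of_injective _ (add_right_injective v0)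
    have hdisj : Disjoint V W := by
      rw [Set.disjoint_left]
      rintro x ⟨p, hp, rfl⟩ ⟨y, ⟨q, hq, rfl⟩, hxy⟩
      -- hxy : v0 + q.rep = p.rep
      by_cases hq0 : q = p0
      · subst hq0
        have : p.rep = 0 := by rw [← hxy]; exact F2.add_self hF v0
        exact p.rep_nonzero this
      by_cases hpq : p = q
      · subst hpq
        exact p0.rep_nonzero (add_eq_right.mp hxy)
      by_cases hpp0 : p = p0
      · subst hpp0
        exact q.rep_nonzero (add_eq_left.mp (hxy.trans hv0.symm))
      refine hA p hp p0 hp0 q hq hpp0 hpq (fun h => hq0 h.symm) ?_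
      rw [sup_submodule_eq]
      have hxe : p.rep = v0 + q.rep := hxy.symm
      rw [hxe]
      exact rank_le_two_of_sum hF p0.rep_nonzero q.rep_nonzero (hxe ▸ p.rep_nonzero)
    have hsum : V.ncard + W.ncard = (V ∪ W).ncard :=
      (Set.ncard_union_eq hdisj hVfin hWfin).symm
    have hle : (V ∪ W).ncard ≤ Nat.card (Fin (n + 1) → F) := by
      rw [← Set.ncard_univ]
      exact Set.ncard_le_ncard (Set.subset_univ _) Set.finite_univ
    omega
  · -- Part 2
    intro H hH
    have hdim : Module.finrank F (Fin (n + 1) → F) = n + 1 := by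
      simp [Module.finrank_pi]
    have hmem : ∀ p : Projectivization F (Fin (n + 1) → F),
        p.submodule ≤ H ↔ p.rep ∈ H := by
      intro p
      rw [submodule_eq]
      exact Submodule.span_singleton_le_iff_mem _ _
    have hkey : ∀ v1 ∉ H, ∀ v2 ∉ H, v1 + v2 ∈ H := by
      intro v1 hv1 v2 hv2
      have hlt : H < H ⊔ span F {v1} := by
        refine lt_of_le_of_ne le_sup_left (fun h => hv1 ?_)
        have hm : v1 ∈ H ⊔ span F {v1} :=
          Submodule.mem_sup_right (Submodule.mem_span_singleton_self v1)
        rwa [← h] at hm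
      have htop : H ⊔ span F {v1} = ⊤ := by
        apply Submodule.eq_top_of_finrank_eq
        have h1 : Module.finrank F ↥(H ⊔ span F {v1})
            ≤ Module.finrank F (Fin (n + 1) → F) := Submodule.finrank_le _
        rw [hdim] at h1
        have h2 := Submodule.finrank_lt_finrank_of_lt hlt
        rw [hH] at h2
      
        rw [hdim]
        omega
      have hv2m : v2 ∈ H ⊔ span F {v1} := htop ▸ Submodule.mem_top
      rw [Submodule.mem_sup] at hv2m
      obtain ⟨h, hh, z, hz, hsum⟩ := hv2m
      rw [Submodule.mem_span_singleton] at hz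
      obtain ⟨c, rfl⟩ := hz
      rcases F2.eq_zero_or_one hF c with hc | hc
      · rw [hc, zero_smul, add_zero] at hsum
        exact absurd (hsum ▸ hh) hv2
      · rw [hc, one_smul] at hsum
        have heq : v1 + v2 = h := by
          rw [← hsum]
          have hvv := F2.add_self (F := F) hF v1
          have : v1 + (h + v1) = h + (v1 + v1) := by abel
          rw [this, hvv, add_zero]
        rw [heq]
        exact hh
    constructor
    · -- cap property
      intro p1 h1 p2 h2 p3 h3 h12 h13 h23 hr
      rw [sup_submodule_eq] at hr
      have hr1 : p1.rep ∉ H := fun h => h1 ((hmem p1).mpr h)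
      have hr2 : p2.rep ∉ H := fun h => h2 ((hmem p2).mpr h)
      have hr3 : p3.rep ∉ H := fun h => h3 ((hmem p3).mpr h)
      have hd12 : p1.rep ≠ p2.rep := fun h => h12 (hrep_inj h)
      have hd13 : p1.rep ≠ p3.rep := fun h => h13 (hrep_inj h)
      have hd23 : p2.rep ≠ p3.rep := fun h => h23 (hrep_inj h)
      have := sum_of_rank_le_two hF p1.rep_nonzero p2.rep_nonzero p3.rep_nonzero
        hd12 hd13 hd23 hr
      exact hr3 (this ▸ hkey _ hr1 _ hr2)
    · -- cardinality
      have himg : Projectivization.rep '' {p : Projectivization F (Fin (n + 1) → F) |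
          ¬ p.submodule ≤ H} = {v | v ∉ H} := by
        ext v
        constructor
        · rintro ⟨p, hp, rfl⟩
          exact fun h => hp ((hmem p).mpr h)
        · intro hv
          have hv0 : v ≠ 0 := fun h => hv (h ▸ H.zero_mem)
          refine ⟨Projectivization.mk F v hv0, ?_, F2.rep_eq hF hv0⟩
          simp only [Set.mem_setOf_eq, hmem, F2.rep_eq hF hv0]
          exact hv
      have himgcard := Set.ncard_image_of_injective
        {p : Projectivization F (Fin (n + 1) → F) | ¬ p.submodule ≤ H} hrep_inj
      rw [himg] at himgcard
      have hc : ({v | v ∉ H} : Set (Fin (n + 1) → F)) = (↑H : Set (Fin (n + 1) → F))ᶜ := rfl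
      have hcompl := Set.ncard_add_ncard_compl (↑H : Set (Fin (n + 1) → F))
        (Set.toFinite _) (Set.toFinite _)
      have hHcard : (↑H : Set (Fin (n + 1) → F)).ncard = 2 ^ n := by
        rw [← Nat.card_coe_set_eq]
        haveI : Fintype ↥H := Fintype.ofFinite _
        rw [show Nat.card ↥(↑H : Set (Fin (n + 1) → F)) = Nat.card ↥H from rfl,
          Nat.card_eq_fintype_card, Module.card_eq_pow_finrank (K := F), hF, hH]
      rw [← himgcard, hc]
      omega
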